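/- Let S ∈ 𝕊_n^π and let T = diag(S^T D_π π) − S^T D_{π²} S be the Schur complement of the (1,1)-block of 𝒜. Then T is a symmetric matrix with nonpositive off-diagonal entries and zero row sums, hence positive semidefinite. -/

import Mathlib

open Matrix Finset

/-- Weighted Cauchy–Schwarz: if `w ≥ 0` sums to 1 then `(∑ w x)² ≤ ∑ w x²`. -/
lemma weighted_cs {n : ℕ} (w x : Fin n → ℝ) (hw : ∀ j, 0 ≤ w j)
    (hw1 : ∑ j, w j = 1) : (∑ j, w j * x j) ^ 2 ≤ ∑ j, w j * x j ^ 2 := by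
  have h := Finset.sum_sq_le_sum_mul_sum_of_sq_eq_mul (Finset.univ : Finset (Fin n))
    (r := fun j => w j * x j) (f := fun j => w j) (g := fun j => w j * x j ^ 2)
    (fun j _ => hw j) (fun j _ => mul_nonneg (hw j) (sq_nonneg _))
    (fun j _ => by ring)
  simpa [hw1] using h

lemma triple_swap {n : ℕ} (f : Fin n → Fin n → Fin n → ℝ) :
    ∑ i, ∑ j, ∑ k, f i j k = ∑ k, ∑ i, ∑ j, f i j k :=
  (Finset.sum_congr rfl fun _ _ => Finset.sum_comm).trans Finset.sum_comm

lemma mul_sum_sum {n : ℕ} (c : ℝ) (a b : Fin n → ℝ) :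
    c * ((∑ i, a i) * (∑ j, b j)) = ∑ i, ∑ j, c * (a i * b j) := by
  rw [Finset.sum_mul_sum, Finset.mul_sum]
  exact Finset.sum_congr rfl fun i _ => Finset.mul_sum _ _ _

/-- The Schur complement `T = diag(Sᵀ D_π π) − Sᵀ D_{π²} S` is symmetric, with
nonpositive off-diagonal entries and zero row sums, and is positive semidefinite. -/
theorem schur_complement_psd (n : ℕ) (π : Fin n → ℝ)
    (hπ : ∀ i, 0 < π i) (hπ1 : π ⬝ᵥ (1 : Fin n → ℝ) = 1)
    (S : Matrix (Fin n) (Fin n) ℝ)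
    (hS1 : S *ᵥ (1 : Fin n → ℝ) = 1) (hπS : π ᵥ* S = π) (hSpos : ∀ i j, 0 < S i j)
    (T : Matrix (Fin n) (Fin n) ℝ)
    (hT : T = Matrix.diagonal (Sᵀ *ᵥ (π * π)) - Sᵀ * Matrix.diagonal (π * π) * S) :
    Tᵀ = T ∧ (∀ i j, i ≠ j → T i j ≤ 0) ∧ T *ᵥ (1 : Fin n → ℝ) = 0 ∧ T.PosSemidef := by
  -- row sums of S
  have hrow : ∀ k, ∑ j, S k j = 1 := by
    intro k
    have := congrFun hS1 k
    simpa [Matrix.mulVec, dotProduct] using this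
  -- entrywise formula for T
  have hTentry : ∀ i j, T i j =
      (if i = j then ∑ k, S k i * (π k * π k) else 0) - ∑ k, S k i * (π k * π k) * S k j := by
    intro i j
    simp [hT, Matrix.sub_apply, Matrix.diagonal_apply, Matrix.mul_apply, Matrix.mulVec,
      dotProduct, Matrix.transpose_apply, Pi.mul_apply, mul_assoc]
  -- symmetry
  have hsym : Tᵀ = T := by
    ext i j
    rw [Matrix.transpose_apply, hTentry, hTentry]
    have hsum : (∑ k, S k j * (π k * π k) * S k i) = ∑ k, S k i * (π k * π k) * S k j :=
      Finset.sum_congr rfl fun k _ => by ring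
    rw [hsum]
    congr 1
    by_cases h : i = j
    · subst h; rfl
    · rw [if_neg (Ne.symm h), if_neg h]
  refine ⟨hsym, ?_, ?_, ?_⟩
  · intro i j hij
    rw [hTentry, if_neg hij, zero_sub, neg_nonpos]
    exact Finset.sum_nonneg fun k _ => mul_nonneg
      (mul_nonneg (hSpos k i).le (mul_nonneg (hπ k).le (hπ k).le)) (hSpos k j).le
  · ext i
    have : ∑ j, T i j = 0 := by
      simp only [hTentry]
      rw [Finset.sum_sub_distrib]
      rw [Finset.sum_ite_eq Finset.univ i (fun j => ∑ k, S k i * (π k * π k))]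
      simp only [Finset.mem_univ, if_pos]
      rw [Finset.sum_comm]
      have : ∀ k, ∑ j, S k i * (π k * π k) * S k j = S k i * (π k * π k) := by
        intro k
        rw [← Finset.mul_sum, hrow, mul_one]
      rw [Finset.sum_congr rfl fun k _ => this k]
      ring
    simpa [Matrix.mulVec, dotProduct] using this
  · rw [Matrix.posSemidef_iff_dotProduct_mulVec]
    constructor
    · exact hsym
    · intro x
      have key : star x ⬝ᵥ (T *ᵥ x) =
          ∑ k, (π k * π k) * ((∑ j, S k j * x j ^ 2) - (∑ j, S k j * x j) ^ 2) := by
        have h1 : star x ⬝ᵥ (T *ᵥ x) = ∑ i, ∑ j, T i j * (x i * x j) := by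
          simp only [dotProduct, Matrix.mulVec, star_trivial, id_eq, Pi.star_apply,
            Finset.mul_sum]
          exact Finset.sum_congr rfl fun i _ => Finset.sum_congr rfl fun j _ => by ring
        rw [h1]
        have h2 : ∀ i j, T i j * (x i * x j) =
            (if i = j then (∑ k, S k i * (π k * π k)) * (x i * x j) else 0)
              - ∑ k, (π k * π k) * ((S k i * x i) * (S k j * x j)) := by
          intro i j
          rw [hTentry, sub_mul, Finset.sum_mul]
          congr 1
          · rw [ite_mul, zero_mul]
          · exact Finset.sum_congr rfl fun k _ => by ring
        rw [Finset.sum_congr rfl fun i _ => Finset.sum_congr rfl fun j _ => h2 i j]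
        simp only [Finset.sum_sub_distrib]
        have hA : (∑ i, ∑ j,
              if i = j then (∑ k, S k i * (π k * π k)) * (x i * x j) else 0)
            = ∑ k, (π k * π k) * ∑ j, S k j * x j ^ 2 := by
          simp only [Finset.sum_ite_eq, Finset.mem_univ, if_pos]
          calc ∑ i, (∑ k, S k i * (π k * π k)) * (x i * x i)
              = ∑ i, ∑ k, (π k * π k) * (S k i * x i ^ 2) := by
                refine Finset.sum_congr rfl fun i _ => ?_
                rw [Finset.sum_mul]
                exact Finset.sum_congr rfl fun k _ => by ring
            _ = ∑ k, ∑ i, (π k * π k) * (S k i * x i ^ 2) := Finset.sum_comm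
            _ = ∑ k, (π k * π k) * ∑ j, S k j * x j ^ 2 := by
                exact Finset.sum_congr rfl fun k _ => (Finset.mul_sum _ _ _).symm
        have hB : ∑ i, ∑ j, ∑ k, (π k * π k) * ((S k i * x i) * (S k j * x j))
            = ∑ k, (π k * π k) * (∑ j, S k j * x j) ^ 2 := by
          rw [triple_swap]
          refine Finset.sum_congr rfl fun k _ => ?_
          rw [sq, ← mul_sum_sum]
        rw [hA, hB, ← Finset.sum_sub_distrib]
        exact Finset.sum_congr rfl fun k _ => by ring
      rw [key]
      refine Finset.sum_nonneg fun k _ => mul_nonneg (mul_nonneg (hπ k).le (hπ k).le) ?_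
      rw [sub_nonneg]
      exact weighted_cs (fun j => S k j) x (fun j => (hSpos k j).le) (hrow k)
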